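/- Let K ≥ 0, let Φ : [0,∞) → L(H) be a family of bounded linear operators on H with operator norm ‖Φ(s)‖ ≤ K for all s, let h ∈ H, and let η : [0,∞) → H be continuous, with s ↦ Φ(s)(η(s)) continuous, satisfying η(t) = S(t)h + ∫₀^t S(t−s) Φ(s)(η(s)) ds for all t ≥ 0. Then for every T > 0 and every a ∈ (0,1) there exists a constant C (depending only on T, K, a and λ₀) such that for all t ∈ (0,T]: ‖η(t)‖ ≤ C ‖h‖, and moreover η(t) ∈ D_a with |η(t)|_a ≤ C (1 + t^{-a}) ‖h‖. -/

import Mathlib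

open Real MeasureTheory Set Filter
open scoped ENNReal Topology

noncomputable section

/-- `Hsp` is the real Hilbert space `ℓ²` of square-summable real sequences. -/
abbrev Hsp : Type := lp (fun _ : ℕ => ℝ) 2

/-- The norm `|x|_σ = (∑ₖ λₖ^{2σ} xₖ²)^{1/2}` of the domain `D((-A)^σ)`. -/
noncomputable def nrmD (lam : ℕ → ℝ) (σ : ℝ) (x : Hsp) : ℝ :=
  Real.sqrt (∑' k, lam k ^ (2 * σ) * (x k) ^ 2)

/-- Membership in the domain `D((-A)^σ)`: `∑ₖ λₖ^{2σ} xₖ² < ∞`. -/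
def memD (lam : ℕ → ℝ) (σ : ℝ) (x : Hsp) : Prop :=
  Summable (fun k => lam k ^ (2 * σ) * (x k) ^ 2)

def evCLM (k : ℕ) : Hsp →L[ℝ] ℝ :=
  LinearMap.mkContinuous
    { toFun := fun x => x k
      map_add' := fun x y => congrFun (lp.coeFn_add x y) k
      map_smul' := fun c x => congrFun (lp.coeFn_smul c x) k }
    1 (fun x => by
      simpa using lp.norm_apply_le_norm (by norm_num : (2:ℝ≥0∞) ≠ 0) x k)

@[simp] lemma evCLM_apply (k : ℕ) (x : Hsp) : evCLM k x = x k := rfl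

lemma aux_norm_sq (x : Hsp) : ‖x‖ ^ 2 = ∑' k, (x k) ^ 2 := by
  have h := lp.norm_rpow_eq_tsum (p := 2) (by norm_num) x
  rw [show ((2:ℝ≥0∞)).toReal = ((2:ℕ):ℝ) by norm_num] at h
  simp only [Real.rpow_natCast] at h
  rw [h]
  exact tsum_congr fun k => by rw [Real.norm_eq_abs, sq_abs]

lemma aux_summable_sq (x : Hsp) : Summable fun k => (x k) ^ 2 := by
  have h := (lp.memℓp x).summable (p := 2) (by norm_num)
  rw [show ((2:ℝ≥0∞)).toReal = ((2:ℕ):ℝ) by norm_num] at h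
  simp only [Real.rpow_natCast] at h
  refine h.congr fun k => ?_
  rw [Real.norm_eq_abs, sq_abs]

lemma aux_norm_le (x y : Hsp) (hxy : ∀ k, |x k| ≤ |y k|) : ‖x‖ ≤ ‖y‖ := by
  have h1 : ∑' k, (x k) ^ 2 ≤ ∑' k, (y k) ^ 2 := by
    refine Summable.tsum_le_tsum (fun k => ?_) (aux_summable_sq x) (aux_summable_sq y)
    calc (x k) ^ 2 = |x k| ^ 2 := (sq_abs _).symm
      _ ≤ |y k| ^ 2 := pow_le_pow_left₀ (abs_nonneg _) (hxy k) 2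
      _ = (y k) ^ 2 := sq_abs _
  calc ‖x‖ = Real.sqrt (‖x‖ ^ 2) := (Real.sqrt_sq (norm_nonneg x)).symm
    _ ≤ Real.sqrt (‖y‖ ^ 2) := by
        apply Real.sqrt_le_sqrt; rw [aux_norm_sq, aux_norm_sq]; exact h1
    _ = ‖y‖ := Real.sqrt_sq (norm_nonneg y)

lemma aux_scalar (a : ℝ) (ha0 : 0 < a) (ha1 : a ≤ 1) {l r : ℝ} (hl : 0 < l) (hr : 0 < r) :
    l ^ a * Real.exp (-(l * r)) ≤ r ^ (-a) := by
  have hlr : 0 < l * r := mul_pos hl hr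
  have h1 : (l * r) ^ a ≤ Real.exp (a * (l * r)) := by
    calc (l * r) ^ a ≤ (Real.exp (l * r)) ^ a := by
          apply Real.rpow_le_rpow hlr.le _ ha0.le
          nlinarith [Real.add_one_le_exp (l * r)]
      _ = Real.exp (a * (l * r)) := by rw [← Real.exp_mul, mul_comm]
  have h2 : l ^ a * r ^ a = (l * r) ^ a := (Real.mul_rpow hl.le hr.le).symm
  have hra : 0 < r ^ a := Real.rpow_pos_of_pos hr a
  have hrna : r ^ (-a) = (r ^ a)⁻¹ := by
    rw [Real.rpow_neg hr.le]
  have key : (l * r) ^ a * Real.exp (-(l * r)) ≤ 1 := by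
    calc (l * r) ^ a * Real.exp (-(l * r)) ≤ Real.exp (a * (l * r)) * Real.exp (-(l * r)) := by
          apply mul_le_mul_of_nonneg_right h1 (Real.exp_pos _).le
      _ = Real.exp ((a - 1) * (l * r)) := by rw [← Real.exp_add]; ring_nf
      _ ≤ 1 := Real.exp_le_one_iff.mpr (mul_nonpos_of_nonpos_of_nonneg (by linarith) hlr.le)
  have : l ^ a * Real.exp (-(l * r)) * r ^ a ≤ 1 := by
    calc l ^ a * Real.exp (-(l * r)) * r ^ a = (l * r) ^ a * Real.exp (-(l * r)) := by
          rw [← h2]; ring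
      _ ≤ 1 := key
  rw [hrna, ← one_div, le_div_iff₀ hra]
  exact this

lemma aux_sq_rpow {r : ℝ} (hr : 0 < r) (b : ℝ) : (r ^ b) ^ 2 = r ^ (2 * b) := by
  rw [sq, ← Real.rpow_add hr, two_mul]

lemma aux_weight (a : ℝ) (ha0 : 0 < a) (ha1 : a ≤ 1) {l r : ℝ} (hl : 0 < l) (hr : 0 < r)
    (x : ℝ) : l ^ (2 * a) * (Real.exp (-(l * r)) * x) ^ 2 ≤ r ^ (-(2 * a)) * x ^ 2 := by
  have e1 : l ^ (2 * a) = (l ^ a) ^ 2 := (aux_sq_rpow hl a).symm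
  have e2 : r ^ (-(2 * a)) = (r ^ (-a)) ^ 2 := by
    rw [aux_sq_rpow hr (-a)]; ring_nf
  have h := aux_scalar a ha0 ha1 hl hr
  have hnn : 0 ≤ l ^ a * Real.exp (-(l * r)) :=
    mul_nonneg (Real.rpow_pos_of_pos hl a).le (Real.exp_pos _).le
  have h2 : (l ^ a * Real.exp (-(l * r))) ^ 2 ≤ (r ^ (-a)) ^ 2 :=
    pow_le_pow_left₀ hnn h 2
  calc l ^ (2 * a) * (Real.exp (-(l * r)) * x) ^ 2
      = (l ^ a * Real.exp (-(l * r))) ^ 2 * x ^ 2 := by rw [e1]; ring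
    _ ≤ (r ^ (-a)) ^ 2 * x ^ 2 := mul_le_mul_of_nonneg_right h2 (sq_nonneg x)
    _ = r ^ (-(2 * a)) * x ^ 2 := by rw [e2]

lemma aux_cont (lam : ℕ → ℝ) (hlampos : ∀ k, 0 < lam k) (S : ℝ → Hsp → Hsp)
    (hS : ∀ t : ℝ, 0 ≤ t → ∀ (x : Hsp) (k : ℕ), S t x k = Real.exp (-(lam k * t)) * x k)
    (t : ℝ) (g : ℝ → Hsp) (hg : ContinuousOn g (Set.Icc 0 t)) :
    ContinuousOn (fun s => S (t - s) (g s)) (Set.Icc 0 t) := by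
  have hsub : ∀ r : ℝ, 0 ≤ r → ∀ u v : Hsp, ‖S r u - S r v‖ ≤ ‖u - v‖ := by
    intro r hr u v
    apply aux_norm_le
    intro k
    have e1 : (S r u - S r v) k = S r u k - S r v k := congrFun (lp.coeFn_sub _ _) k
    have e2 : (u - v) k = u k - v k := congrFun (lp.coeFn_sub _ _) k
    rw [e1, e2, hS r hr u k, hS r hr v k, ← mul_sub, abs_mul, abs_of_pos (Real.exp_pos _)]
    have h1 : Real.exp (-(lam k * r)) ≤ 1 :=
      Real.exp_le_one_iff.mpr (neg_nonpos.mpr (mul_nonneg (hlampos k).le hr))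
    nlinarith [abs_nonneg (u k - v k), Real.exp_pos (-(lam k * r))]
  intro s₀ hs₀
  set x₀ := g s₀ with hx₀
  set D : ℝ → ℝ := fun s =>
    ∑' k, ((Real.exp (-(lam k * (t - s))) - Real.exp (-(lam k * (t - s₀)))) * x₀ k) ^ 2 with hD
  have hDt : Tendsto D (𝓝[Set.Icc 0 t] s₀) (𝓝 0) := by
    have hmain : Tendsto D (𝓝[Set.Icc 0 t] s₀) (𝓝 (∑' _k : ℕ, (0:ℝ))) := by
      apply tendsto_tsum_of_dominated_convergence (bound := fun k => 4 * (x₀ k) ^ 2)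
      · exact (aux_summable_sq x₀).mul_left 4
      · intro k
        have hc : Continuous (fun s : ℝ =>
            ((Real.exp (-(lam k * (t - s))) - Real.exp (-(lam k * (t - s₀)))) * x₀ k) ^ 2) := by
          fun_prop
        have h2 := (hc.tendsto s₀).mono_left (nhdsWithin_le_nhds (s := Set.Icc 0 t))
        simpa using h2
      · filter_upwards [self_mem_nhdsWithin] with s hs
        intro k
        have h1 : Real.exp (-(lam k * (t - s))) ≤ 1 :=
          Real.exp_le_one_iff.mpr (neg_nonpos.mpr (mul_nonneg (hlampos k).le (by linarith [hs.2])))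
        have h2 : Real.exp (-(lam k * (t - s₀))) ≤ 1 :=
          Real.exp_le_one_iff.mpr (neg_nonpos.mpr (mul_nonneg (hlampos k).le (by linarith [hs₀.2])))
        have h3 := Real.exp_pos (-(lam k * (t - s)))
        have h4 := Real.exp_pos (-(lam k * (t - s₀)))
        have hd : (Real.exp (-(lam k * (t - s))) - Real.exp (-(lam k * (t - s₀)))) ^ 2 ≤ 4 := by
          nlinarith
        rw [Real.norm_eq_abs, abs_of_nonneg (sq_nonneg _), mul_pow]
        exact mul_le_mul_of_nonneg_right hd (sq_nonneg _)
    simpa using hmain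
  have hgt : Tendsto (fun s => ‖g s - g s₀‖) (𝓝[Set.Icc 0 t] s₀) (𝓝 0) :=
    tendsto_iff_norm_sub_tendsto_zero.mp (hg s₀ hs₀)
  have hEt : Tendsto (fun s => Real.sqrt (D s)) (𝓝[Set.Icc 0 t] s₀) (𝓝 0) := by
    have h2 := (Real.continuous_sqrt.tendsto 0).comp hDt
    simpa [Function.comp_def] using h2
  have hsq : Tendsto (fun s => ‖S (t - s) (g s) - S (t - s₀) (g s₀)‖)
      (𝓝[Set.Icc 0 t] s₀) (𝓝 0) := by
    apply squeeze_zero' (Filter.Eventually.of_forall (fun s => norm_nonneg _)) ?_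
      (by simpa using hgt.add hEt)
    filter_upwards [self_mem_nhdsWithin] with s hs
    have hts : 0 ≤ t - s := by linarith [hs.2]
    have hts₀ : 0 ≤ t - s₀ := by linarith [hs₀.2]
    have tri : ‖S (t - s) (g s) - S (t - s₀) x₀‖ ≤
        ‖S (t - s) (g s) - S (t - s) x₀‖ + ‖S (t - s) x₀ - S (t - s₀) x₀‖ :=
      norm_sub_le_norm_sub_add_norm_sub _ _ _
    have h1 : ‖S (t - s) (g s) - S (t - s) x₀‖ ≤ ‖g s - x₀‖ := hsub _ hts _ _
    have h2 : ‖S (t - s) x₀ - S (t - s₀) x₀‖ = Real.sqrt (D s) := by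
      have hn := aux_norm_sq (S (t - s) x₀ - S (t - s₀) x₀)
      have hco : ∀ k, (S (t - s) x₀ - S (t - s₀) x₀) k =
          (Real.exp (-(lam k * (t - s))) - Real.exp (-(lam k * (t - s₀)))) * x₀ k := by
        intro k
        rw [congrFun (lp.coeFn_sub _ _) k, Pi.sub_apply, hS _ hts, hS _ hts₀]
        ring
      rw [← Real.sqrt_sq (norm_nonneg (S (t - s) x₀ - S (t - s₀) x₀)), hn]
      exact congrArg Real.sqrt (tsum_congr fun k => by rw [hco k])
    calc ‖S (t - s) (g s) - S (t - s₀) (g s₀)‖ ≤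
        ‖S (t - s) (g s) - S (t - s) x₀‖ + ‖S (t - s) x₀ - S (t - s₀) x₀‖ := tri
      _ ≤ ‖g s - g s₀‖ + Real.sqrt (D s) := by rw [h2]; exact add_le_add h1 le_rfl
  exact tendsto_iff_norm_sub_tendsto_zero.mpr hsq

set_option maxHeartbeats 2000000 in
/-- Proposition B.4: the first variation `η` of the averaged flow, solving the mild
equation `η(t) = S(t)h + ∫₀ᵗ S(t−s) Φ(s)(η(s)) ds` for a uniformly bounded operator
family `Φ`, satisfies `‖η(t)‖ ≤ C‖h‖` and `η(t) ∈ D_a` with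
`|η(t)|_a ≤ C (1 + t^{-a}) ‖h‖` on `(0,T]`, `C` depending only on `T`, `K`, `a`, `λ₀`. -/
theorem stmt12
    (lam : ℕ → ℝ) (lam0 : ℝ) (hlam0 : 0 < lam0) (hlam : ∀ k, lam0 ≤ lam k)
    (S : ℝ → Hsp → Hsp)
    (hS : ∀ t : ℝ, 0 ≤ t → ∀ (x : Hsp) (k : ℕ), S t x k = Real.exp (-(lam k * t)) * x k)
    (K : ℝ) (hK : 0 ≤ K)
    (T : ℝ) (hT : 0 < T) (a : ℝ) (ha : a ∈ Set.Ioo (0:ℝ) 1) :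
    ∃ C > 0, ∀ Φ : ℝ → Hsp →L[ℝ] Hsp, (∀ s : ℝ, 0 ≤ s → ‖Φ s‖ ≤ K) →
      ∀ h : Hsp, ∀ η : ℝ → Hsp,
      ContinuousOn η (Set.Ici 0) →
      ContinuousOn (fun s => Φ s (η s)) (Set.Ici 0) →
      (∀ t : ℝ, 0 ≤ t → η t = S t h + ∫ s in (0:ℝ)..t, S (t - s) (Φ s (η s))) →
      ∀ t ∈ Set.Ioc (0:ℝ) T,
        ‖η t‖ ≤ C * ‖h‖ ∧
        memD lam a (η t) ∧
        nrmD lam a (η t) ≤ C * (1 + t ^ (-a)) * ‖h‖ := by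
  obtain ⟨ha0, ha1⟩ := ha
  have h1a : 0 < 1 - a := by linarith
  set C1 := Real.exp (K * T) with hC1def
  have hC1 : 0 < C1 := Real.exp_pos _
  have hC1one : 1 ≤ C1 := Real.one_le_exp (by positivity)
  set Cq : ℝ := K * C1 * T ^ (1 - a) / (1 - a) with hCqdef
  have hCq : 0 ≤ Cq := by positivity
  have hsqrt2 : (0:ℝ) ≤ Real.sqrt 2 := Real.sqrt_nonneg 2
  have hsqrt2' : (1:ℝ) ≤ Real.sqrt 2 := by
    rw [show (1:ℝ) = Real.sqrt 1 by simp]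
    exact Real.sqrt_le_sqrt (by norm_num)
  refine ⟨C1 + Real.sqrt 2 * (1 + Cq), by positivity, ?_⟩
  set C : ℝ := C1 + Real.sqrt 2 * (1 + Cq) with hCdef
  intro Φ hΦ h η hη hg heq
  have hC2 : Real.sqrt 2 ≤ C := by nlinarith
  have hC3 : Real.sqrt 2 * Cq ≤ C := by nlinarith
  have hlampos : ∀ k, 0 < lam k := fun k => lt_of_lt_of_le hlam0 (hlam k)
  set g : ℝ → Hsp := fun s => Φ s (η s) with hgdef
  have heq' : ∀ t : ℝ, 0 ≤ t → η t = S t h + ∫ s in (0:ℝ)..t, S (t - s) (g s) := heq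
  -- basic semigroup estimates
  have hSnorm : ∀ r : ℝ, 0 ≤ r → ∀ x : Hsp, ‖S r x‖ ≤ ‖x‖ := by
    intro r hr x
    apply aux_norm_le
    intro k
    rw [hS r hr x k, abs_mul, abs_of_pos (Real.exp_pos _)]
    have h1 : Real.exp (-(lam k * r)) ≤ 1 :=
      Real.exp_le_one_iff.mpr (neg_nonpos.mpr (mul_nonneg (hlampos k).le hr))
    nlinarith [abs_nonneg (x k), Real.exp_pos (-(lam k * r))]
  have hgIcc : ∀ t : ℝ, ContinuousOn g (Set.Icc 0 t) :=
    fun t => hg.mono (fun s hs => hs.1)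
  have hgcont : ∀ t : ℝ, ContinuousOn (fun s => S (t - s) (g s)) (Set.Icc 0 t) :=
    fun t => aux_cont lam hlampos S hS t g (hgIcc t)
  have hIntg : ∀ t : ℝ, 0 ≤ t → IntervalIntegrable (fun s => S (t - s) (g s)) volume 0 t := by
    intro t ht
    apply ContinuousOn.intervalIntegrable
    rw [Set.uIcc_of_le ht]
    exact hgcont t
  -- part 1 : Gronwall bound
  set nf : ℝ → ℝ := fun s => ‖η (max s 0)‖ with hnfdef
  have hmax : Continuous fun s : ℝ => max s 0 := continuous_id.max continuous_const
  have hnf : Continuous nf := (hη.comp_continuous hmax (fun s => le_max_right s 0)).norm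
  have hnfeq : ∀ s : ℝ, 0 ≤ s → nf s = ‖η s‖ := by
    intro s hs; simp only [hnfdef, max_eq_left hs]
  have hnfnn : ∀ s, 0 ≤ nf s := fun s => norm_nonneg _
  have hineq : ∀ t : ℝ, 0 ≤ t → ‖η t‖ ≤ ‖h‖ + K * ∫ s in (0:ℝ)..t, nf s := by
    intro t ht
    have e2 : ‖∫ s in (0:ℝ)..t, S (t - s) (g s)‖ ≤ ∫ s in (0:ℝ)..t, ‖S (t - s) (g s)‖ :=
      intervalIntegral.norm_integral_le_integral_norm ht
    have e3 : (∫ s in (0:ℝ)..t, ‖S (t - s) (g s)‖) ≤ ∫ s in (0:ℝ)..t, K * nf s := by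
      apply intervalIntegral.integral_mono_on ht ((hIntg t ht).norm)
        ((continuous_const.mul hnf).intervalIntegrable 0 t)
      intro s hs
      have h1 : ‖S (t - s) (g s)‖ ≤ ‖g s‖ := hSnorm (t - s) (by linarith [hs.2]) _
      have h2 : ‖g s‖ ≤ K * ‖η s‖ :=
        le_trans ((Φ s).le_opNorm (η s))
          (mul_le_mul_of_nonneg_right (hΦ s hs.1) (norm_nonneg _))
      show ‖S (t - s) (g s)‖ ≤ K * nf s
      rw [hnfeq s hs.1]
      linarith
    have e4 : (∫ s in (0:ℝ)..t, K * nf s) = K * ∫ s in (0:ℝ)..t, nf s :=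
      intervalIntegral.integral_const_mul K nf
    calc ‖η t‖ = ‖S t h + ∫ s in (0:ℝ)..t, S (t - s) (g s)‖ := by rw [heq' t ht]
      _ ≤ ‖S t h‖ + ‖∫ s in (0:ℝ)..t, S (t - s) (g s)‖ := norm_add_le _ _
      _ ≤ ‖h‖ + ∫ s in (0:ℝ)..t, ‖S (t - s) (g s)‖ := add_le_add (hSnorm t ht h) e2
      _ ≤ ‖h‖ + ∫ s in (0:ℝ)..t, K * nf s := by linarith
      _ = ‖h‖ + K * ∫ s in (0:ℝ)..t, nf s := by rw [e4]
  set F : ℝ → ℝ := fun u => ∫ s in (0:ℝ)..u, nf s with hFdef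
  have hF' : ∀ x : ℝ, HasDerivAt F (nf x) x :=
    fun x => (hnf.integral_hasStrictDerivAt 0 x).hasDerivAt
  have hFc : ContinuousOn F (Set.Icc 0 T) :=
    fun x _ => (hF' x).continuousAt.continuousWithinAt
  have hFnn : ∀ x : ℝ, 0 ≤ x → 0 ≤ F x :=
    fun x hx => intervalIntegral.integral_nonneg hx (fun s _ => hnfnn s)
  have hgron : ∀ x ∈ Set.Icc (0:ℝ) T, ‖F x‖ ≤ gronwallBound 0 K ‖h‖ (x - 0) := by
    apply norm_le_gronwallBound_of_norm_deriv_right_le hFc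
      (fun x _ => (hF' x).hasDerivWithinAt)
    · simp [hFdef]
    · intro x hx
      have h1 := hineq x hx.1
      have h2 : nf x = ‖η x‖ := hnfeq x hx.1
      rw [Real.norm_eq_abs, Real.norm_eq_abs, abs_of_nonneg (hnfnn x),
        abs_of_nonneg (hFnn x hx.1), h2]
      linarith
  have hetaB : ∀ s ∈ Set.Icc (0:ℝ) T, ‖η s‖ ≤ C1 * ‖h‖ := by
    intro s hs
    have h1 := hineq s hs.1
    have h2 := hgron s hs
    rw [Real.norm_eq_abs, abs_of_nonneg (hFnn s hs.1)] at h2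
    have hexp : Real.exp (K * s) ≤ C1 := by
      rw [hC1def]
      exact Real.exp_le_exp.mpr (mul_le_mul_of_nonneg_left hs.2 hK)
    by_cases hK0 : K = 0
    · rw [hK0] at h1
      have : (1:ℝ) * ‖h‖ ≤ C1 * ‖h‖ :=
        mul_le_mul_of_nonneg_right hC1one (norm_nonneg h)
      linarith
    · rw [gronwallBound_of_K_ne_0 hK0] at h2
      simp only [zero_mul, zero_add, sub_zero] at h2
      have hKpos : 0 < K := lt_of_le_of_ne hK (Ne.symm hK0)
      have h3 : K * F s ≤ ‖h‖ * (Real.exp (K * s) - 1) := by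
        have := mul_le_mul_of_nonneg_left h2 hK
        calc K * F s ≤ K * (‖h‖ / K * (Real.exp (K * s) - 1)) := this
          _ = ‖h‖ * (Real.exp (K * s) - 1) := by field_simp
      have h4 : ‖η s‖ ≤ ‖h‖ * Real.exp (K * s) := by linarith
      calc ‖η s‖ ≤ ‖h‖ * Real.exp (K * s) := h4
        _ ≤ ‖h‖ * C1 := mul_le_mul_of_nonneg_left hexp (norm_nonneg h)
        _ = C1 * ‖h‖ := mul_comm _ _
  -- part 2
  intro t htIoc
  obtain ⟨ht0, htT⟩ := htIoc
  have hCC : C1 ≤ C := by nlinarith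
  have part1 : ‖η t‖ ≤ C * ‖h‖ := by
    have := hetaB t ⟨ht0.le, htT⟩
    have h2 : C1 * ‖h‖ ≤ C * ‖h‖ := mul_le_mul_of_nonneg_right hCC (norm_nonneg h)
    linarith
  set B : ℝ := K * (C1 * ‖h‖) with hBdef
  have hB : 0 ≤ B := by positivity
  have hgB : ∀ s ∈ Set.Icc (0:ℝ) t, ‖g s‖ ≤ B := by
    intro s hs
    calc ‖g s‖ ≤ ‖Φ s‖ * ‖η s‖ := (Φ s).le_opNorm (η s)
      _ ≤ K * (C1 * ‖h‖) :=
        mul_le_mul (hΦ s hs.1) (hetaB s ⟨hs.1, hs.2.trans htT⟩) (norm_nonneg _) hK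
  obtain ⟨v, hvdef⟩ : ∃ w : Hsp, w = ∫ s in (0:ℝ)..t, S (t - s) (g s) := ⟨_, rfl⟩
  have hcoord : ∀ k, v k = ∫ s in (0:ℝ)..t, Real.exp (-(lam k * (t - s))) * g s k := by
    intro k
    have h1 : (∫ s in (0:ℝ)..t, evCLM k (S (t - s) (g s))) = evCLM k v := by
      rw [hvdef]
      exact (evCLM k).intervalIntegral_comp_comm (hIntg t ht0.le)
    rw [evCLM_apply] at h1
    rw [← h1]
    apply intervalIntegral.integral_congr
    intro s hs
    rw [Set.uIcc_of_le ht0.le] at hs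
    show evCLM k (S (t - s) (g s)) = Real.exp (-(lam k * (t - s))) * g s k
    rw [evCLM_apply, hS (t - s) (by linarith [hs.2]) (g s) k]
  have gkc : ∀ k, ContinuousOn (fun s => g s k) (Set.Icc 0 t) := by
    intro k
    have := (evCLM k).continuous.comp_continuousOn (hgIcc t)
    exact this
  have hexpc : ∀ k, Continuous (fun s : ℝ => Real.exp (-(lam k * (t - s)))) := by
    intro k; fun_prop
  set M : ℝ := B * (t ^ (1 - a) / (1 - a)) with hMdef
  have hM0 : 0 ≤ M := by positivity
  have hrint : IntervalIntegrable (fun s => (t - s) ^ (-a)) volume 0 t := by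
    have h0 : IntervalIntegrable (fun x : ℝ => x ^ (-a)) volume t 0 :=
      intervalIntegral.intervalIntegrable_rpow' (by linarith)
    have h2 := h0.comp_sub_left t
    simpa using h2
  have hrval : (∫ s in (0:ℝ)..t, (t - s) ^ (-a)) = t ^ (1 - a) / (1 - a) := by
    rw [intervalIntegral.integral_comp_sub_left (fun x => x ^ (-a)) t]
    simp only [sub_self, sub_zero]
    rw [integral_rpow (Or.inl (by linarith))]
    rw [Real.zero_rpow (by linarith : -a + 1 ≠ 0)]
    rw [show -a + 1 = 1 - a by ring, sub_zero]
  have hQ : ∀ Fs : Finset ℕ, (∑ k ∈ Fs, lam k ^ (2 * a) * (v k) ^ 2) ≤ M ^ 2 := by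
    intro Fs
    set Q : ℝ := ∑ k ∈ Fs, lam k ^ (2 * a) * (v k) ^ 2 with hQdef
    have hQ0 : 0 ≤ Q :=
      Finset.sum_nonneg fun k _ =>
        mul_nonneg (Real.rpow_nonneg (hlampos k).le _) (sq_nonneg _)
    have hconti : ∀ k ∈ Fs, IntervalIntegrable
        (fun s => lam k ^ (2 * a) * v k * (Real.exp (-(lam k * (t - s))) * g s k))
        volume 0 t := by
      intro k _
      apply ContinuousOn.intervalIntegrable
      rw [Set.uIcc_of_le ht0.le]
      exact continuousOn_const.mul (((hexpc k).continuousOn).mul (gkc k))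
    have hQeq : Q = ∫ s in (0:ℝ)..t,
        ∑ k ∈ Fs, lam k ^ (2 * a) * v k * (Real.exp (-(lam k * (t - s))) * g s k) := by
      rw [intervalIntegral.integral_finset_sum hconti]
      apply Finset.sum_congr rfl
      intro k _
      rw [intervalIntegral.integral_const_mul, ← hcoord k]
      ring
    have hb : ∀ s ∈ Set.Ico (0:ℝ) t,
        (∑ k ∈ Fs, lam k ^ (2 * a) * v k * (Real.exp (-(lam k * (t - s))) * g s k)) ≤
          Real.sqrt Q * (B * (t - s) ^ (-a)) := by
      intro s hs
      have hts : 0 < t - s := by linarith [hs.2]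
      set p : ℕ → ℝ := fun k => lam k ^ a * v k with hpdef
      set q : ℕ → ℝ := fun k => lam k ^ a * (Real.exp (-(lam k * (t - s))) * g s k) with hqdef
      have e1 : ∀ k, (lam k ^ a) ^ 2 = lam k ^ (2 * a) := fun k => aux_sq_rpow (hlampos k) a
      have hpq : ∀ k, lam k ^ (2 * a) * v k * (Real.exp (-(lam k * (t - s))) * g s k)
          = p k * q k := by
        intro k
        simp only [hpdef, hqdef]
        rw [← e1 k]
        ring
      have hp2 : (∑ k ∈ Fs, p k ^ 2) = Q := by
        apply Finset.sum_congr rfl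
        intro k _
        simp only [hpdef]
        rw [mul_pow, e1 k]
      have hsumg : (∑ k ∈ Fs, (g s k) ^ 2) ≤ B ^ 2 := by
        have h1 : (∑ k ∈ Fs, (g s k) ^ 2) ≤ ‖g s‖ ^ 2 := by
          rw [aux_norm_sq]
          exact Summable.sum_le_tsum Fs (fun k _ => sq_nonneg _) (aux_summable_sq _)
        have h2 : ‖g s‖ ^ 2 ≤ B ^ 2 :=
          pow_le_pow_left₀ (norm_nonneg _) (hgB s ⟨hs.1, hs.2.le⟩) 2
        linarith
      have hq2 : (∑ k ∈ Fs, q k ^ 2) ≤ (t - s) ^ (-(2 * a)) * B ^ 2 := by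
        calc (∑ k ∈ Fs, q k ^ 2)
            ≤ ∑ k ∈ Fs, (t - s) ^ (-(2 * a)) * (g s k) ^ 2 := by
              apply Finset.sum_le_sum
              intro k _
              simp only [hqdef]
              rw [mul_pow, e1 k]
              exact aux_weight a ha0 ha1.le (hlampos k) hts (g s k)
          _ = (t - s) ^ (-(2 * a)) * ∑ k ∈ Fs, (g s k) ^ 2 := by rw [Finset.mul_sum]
          _ ≤ (t - s) ^ (-(2 * a)) * B ^ 2 :=
              mul_le_mul_of_nonneg_left hsumg (Real.rpow_nonneg hts.le _)
      have hcs := Finset.sum_mul_sq_le_sq_mul_sq Fs p q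
      have hq2nn : 0 ≤ ∑ k ∈ Fs, q k ^ 2 := Finset.sum_nonneg fun k _ => sq_nonneg _
      have step : (∑ k ∈ Fs, p k * q k) ≤ Real.sqrt Q * Real.sqrt ((t - s) ^ (-(2 * a)) * B ^ 2) := by
        calc (∑ k ∈ Fs, p k * q k) ≤ |∑ k ∈ Fs, p k * q k| := le_abs_self _
          _ = Real.sqrt ((∑ k ∈ Fs, p k * q k) ^ 2) := (Real.sqrt_sq_eq_abs _).symm
          _ ≤ Real.sqrt ((∑ k ∈ Fs, p k ^ 2) * ∑ k ∈ Fs, q k ^ 2) := Real.sqrt_le_sqrt hcs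
          _ = Real.sqrt (∑ k ∈ Fs, p k ^ 2) * Real.sqrt (∑ k ∈ Fs, q k ^ 2) :=
              Real.sqrt_mul (by rw [hp2]; exact hQ0) _
          _ ≤ Real.sqrt Q * Real.sqrt ((t - s) ^ (-(2 * a)) * B ^ 2) := by
              rw [hp2]
              exact mul_le_mul_of_nonneg_left (Real.sqrt_le_sqrt hq2) (Real.sqrt_nonneg _)
      have hsq2 : Real.sqrt ((t - s) ^ (-(2 * a)) * B ^ 2) = (t - s) ^ (-a) * B := by
        rw [show (t - s) ^ (-(2 * a)) = ((t - s) ^ (-a)) ^ 2 by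
          rw [aux_sq_rpow hts (-a)]; ring_nf]
        rw [← mul_pow, Real.sqrt_sq (mul_nonneg (Real.rpow_nonneg hts.le _) hB)]
      calc (∑ k ∈ Fs, lam k ^ (2 * a) * v k * (Real.exp (-(lam k * (t - s))) * g s k))
          = ∑ k ∈ Fs, p k * q k := Finset.sum_congr rfl fun k _ => hpq k
        _ ≤ Real.sqrt Q * Real.sqrt ((t - s) ^ (-(2 * a)) * B ^ 2) := step
        _ = Real.sqrt Q * (B * (t - s) ^ (-a)) := by rw [hsq2]; ring
    have hIl : IntervalIntegrable (fun s =>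
        ∑ k ∈ Fs, lam k ^ (2 * a) * v k * (Real.exp (-(lam k * (t - s))) * g s k))
        volume 0 t := by
      have h2 := IntervalIntegrable.sum Fs hconti
      have e : (∑ i ∈ Fs, fun s => lam i ^ (2 * a) * v i * (Real.exp (-(lam i * (t - s))) * g s i))
          = fun s => ∑ k ∈ Fs, lam k ^ (2 * a) * v k * (Real.exp (-(lam k * (t - s))) * g s k) := by
        funext s
        simp
      rw [e] at h2
      exact h2
    have hIr : IntervalIntegrable (fun s => Real.sqrt Q * (B * (t - s) ^ (-a))) volume 0 t :=
      ((hrint.const_mul B).const_mul (Real.sqrt Q))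
    have hbae : (fun s => ∑ k ∈ Fs, lam k ^ (2 * a) * v k * (Real.exp (-(lam k * (t - s))) * g s k))
        ≤ᵐ[volume.restrict (Set.Icc 0 t)] fun s => Real.sqrt Q * (B * (t - s) ^ (-a)) := by
      have h2 : ∀ᵐ s : ℝ, s ≠ t := by
        rw [ae_iff]
        simp only [not_not]
        rw [Set.setOf_eq_eq_singleton]
        exact measure_singleton t
      filter_upwards [ae_restrict_mem measurableSet_Icc, ae_restrict_of_ae h2] with s hs hst
      exact hb s ⟨hs.1, lt_of_le_of_ne hs.2 hst⟩
    have hle := intervalIntegral.integral_mono_ae_restrict ht0.le hIl hIr hbae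
    rw [← hQeq] at hle
    have hR : (∫ s in (0:ℝ)..t, Real.sqrt Q * (B * (t - s) ^ (-a)))
        = Real.sqrt Q * M := by
      rw [hMdef]
      rw [show (fun s => Real.sqrt Q * (B * (t - s) ^ (-a)))
        = fun s => (Real.sqrt Q * B) * (t - s) ^ (-a) by funext s; ring]
      rw [intervalIntegral.integral_const_mul, hrval]
      ring
    rw [hR] at hle
    nlinarith [Real.sq_sqrt hQ0, Real.sqrt_nonneg Q, sq_nonneg (Real.sqrt Q - M)]
  -- combine
  have hco : ∀ k, (η t) k = Real.exp (-(lam k * t)) * h k + v k := by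
    intro k
    rw [heq' t ht0.le, ← hvdef]
    rw [congrFun (lp.coeFn_add (S t h) v) k, Pi.add_apply, hS t ht0.le h k]
  have hterm : ∀ k, lam k ^ (2 * a) * ((η t) k) ^ 2 ≤
      2 * ((t ^ (-(2 * a))) * (h k) ^ 2) + 2 * (lam k ^ (2 * a) * (v k) ^ 2) := by
    intro k
    have hw := aux_weight a ha0 ha1.le (hlampos k) ht0 (h k)
    have hl2 : (0:ℝ) ≤ lam k ^ (2 * a) := Real.rpow_nonneg (hlampos k).le _
    rw [hco k]
    nlinarith [sq_nonneg (Real.exp (-(lam k * t)) * h k - v k),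
      mul_nonneg hl2 (sq_nonneg (Real.exp (-(lam k * t)) * h k - v k))]
  set R : ℝ := 2 * (t ^ (-(2 * a)) * ‖h‖ ^ 2) + 2 * M ^ 2 with hRdef
  have hpart : ∀ Fs : Finset ℕ, (∑ k ∈ Fs, lam k ^ (2 * a) * ((η t) k) ^ 2) ≤ R := by
    intro Fs
    have h1 : (∑ k ∈ Fs, (h k) ^ 2) ≤ ‖h‖ ^ 2 := by
      rw [aux_norm_sq]
      exact Summable.sum_le_tsum Fs (fun k _ => sq_nonneg _) (aux_summable_sq _)
    have h2 := hQ Fs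
    have htnn : (0:ℝ) ≤ t ^ (-(2 * a)) := Real.rpow_nonneg ht0.le _
    calc (∑ k ∈ Fs, lam k ^ (2 * a) * ((η t) k) ^ 2)
        ≤ ∑ k ∈ Fs, (2 * ((t ^ (-(2 * a))) * (h k) ^ 2) + 2 * (lam k ^ (2 * a) * (v k) ^ 2)) :=
          Finset.sum_le_sum fun k _ => hterm k
      _ = 2 * (t ^ (-(2 * a)) * ∑ k ∈ Fs, (h k) ^ 2)
          + 2 * ∑ k ∈ Fs, lam k ^ (2 * a) * (v k) ^ 2 := by
          simp only [Finset.sum_add_distrib, ← Finset.mul_sum]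
          try ring
      _ ≤ R := by
          rw [hRdef]
          nlinarith
  have hsummable : Summable fun k => lam k ^ (2 * a) * ((η t) k) ^ 2 :=
    summable_of_sum_le (fun k =>
      mul_nonneg (Real.rpow_nonneg (hlampos k).le _) (sq_nonneg _)) hpart
  have htsum : (∑' k, lam k ^ (2 * a) * ((η t) k) ^ 2) ≤ R :=
    Summable.tsum_le_of_sum_le hsummable hpart
  refine ⟨part1, hsummable, ?_⟩
  -- the weighted norm bound
  have hMle : M ≤ Cq * ‖h‖ := by
    rw [hMdef, hBdef, hCqdef]
    have h1 : t ^ (1 - a) ≤ T ^ (1 - a) :=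
      Real.rpow_le_rpow ht0.le htT h1a.le
    have h2 : (0:ℝ) ≤ K * (C1 * ‖h‖) / (1 - a) := by positivity
    calc K * (C1 * ‖h‖) * (t ^ (1 - a) / (1 - a))
        = K * (C1 * ‖h‖) / (1 - a) * t ^ (1 - a) := by ring
      _ ≤ K * (C1 * ‖h‖) / (1 - a) * T ^ (1 - a) := mul_le_mul_of_nonneg_left h1 h2
      _ = K * C1 * T ^ (1 - a) / (1 - a) * ‖h‖ := by ring
  set W : ℝ := Real.sqrt 2 * (t ^ (-a) * ‖h‖) + Real.sqrt 2 * M with hWdef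
  have hta : (0:ℝ) ≤ t ^ (-a) := Real.rpow_nonneg ht0.le _
  have hW0 : 0 ≤ W := by positivity
  have hRW : R ≤ W ^ 2 := by
    rw [hRdef, hWdef]
    have e2 : t ^ (-(2 * a)) = (t ^ (-a)) ^ 2 := by rw [aux_sq_rpow ht0 (-a)]; ring_nf
    rw [e2]
    have hs2 : Real.sqrt 2 ^ 2 = 2 := Real.sq_sqrt (by norm_num)
    nlinarith [mul_nonneg (mul_nonneg hta (norm_nonneg h)) hM0, sq_nonneg (t ^ (-a) * ‖h‖)]
  have hnrm : nrmD lam a (η t) ≤ W := by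
    rw [nrmD]
    calc Real.sqrt (∑' k, lam k ^ (2 * a) * ((η t) k) ^ 2)
        ≤ Real.sqrt R := Real.sqrt_le_sqrt htsum
      _ ≤ Real.sqrt (W ^ 2) := Real.sqrt_le_sqrt hRW
      _ = W := Real.sqrt_sq hW0
  have hfinal : W ≤ C * (1 + t ^ (-a)) * ‖h‖ := by
    have h1 : Real.sqrt 2 * (t ^ (-a) * ‖h‖) ≤ C * (t ^ (-a) * ‖h‖) :=
      mul_le_mul_of_nonneg_right hC2 (mul_nonneg hta (norm_nonneg h))
    have h2 : Real.sqrt 2 * M ≤ Real.sqrt 2 * (Cq * ‖h‖) :=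
      mul_le_mul_of_nonneg_left hMle hsqrt2
    have h3 : Real.sqrt 2 * Cq * ‖h‖ ≤ C * ‖h‖ :=
      mul_le_mul_of_nonneg_right hC3 (norm_nonneg h)
    rw [hWdef]
    nlinarith
  exact le_trans hnrm hfinal

end
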